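/- Let f(z) = 4mN/√(z² + r₀²) with m, N, r₀ > 0. Then lim_{c → (-4mN/r₀)⁺} ∫_{-t₁(c)}^{t₁(c)} dz/√(f(z)+c) = π √(r₀³/(2mN)), where t₁(c) = √(16m²N²/c² − r₀²). -/

import Mathlib

open Real Filter Set Topology intervalIntegral

lemma image_sin (T : ℝ) (hT : 0 < T) :
    ((fun θ => T * Real.sin θ) '' Set.Ioo (-(π/2)) (π/2)) = Set.Ioo (-T) T := by
  ext z
  simp only [Set.mem_image, Set.mem_Ioo]
  constructor
  · rintro ⟨θ, hθ, rfl⟩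
    have hpi := Real.pi_pos
    have h1 : Real.sin θ < 1 := by
      have := Real.strictMonoOn_sin (Set.mem_Icc.2 ⟨hθ.1.le, hθ.2.le⟩)
        (Set.mem_Icc.2 ⟨by linarith, le_refl _⟩) hθ.2
      simpa using this
    have h2 : -1 < Real.sin θ := by
      have := Real.strictMonoOn_sin (Set.mem_Icc.2 ⟨le_refl _, by linarith⟩)
        (Set.mem_Icc.2 ⟨hθ.1.le, hθ.2.le⟩) hθ.1
      simpa using this
    constructor <;> nlinarith
  · intro hz
    have h1 : -1 < z / T := by rw [lt_div_iff₀ hT]; nlinarith [hz.1]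
    have h2 : z / T < 1 := by rw [div_lt_iff₀ hT]; nlinarith [hz.2]
    refine ⟨Real.arcsin (z / T), ⟨?_, ?_⟩, ?_⟩
    · exact Real.neg_pi_div_two_lt_arcsin.mpr h1
    · exact Real.arcsin_lt_pi_div_two.mpr h2
    · rw [Real.sin_arcsin h1.le h2.le]; field_simp

lemma key_cov(a r₀ c S T : ℝ) (ha : 0 < a) (hr₀ : 0 < r₀) (hS : r₀ < S)
    (hc : c = -(a/S)) (hT : T = Real.sqrt (S^2 - r₀^2)) :
    (∫ z in (-T)..T, 1 / Real.sqrt (a / Real.sqrt (z^2+r₀^2) + c))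
    = ∫ θ in Set.Ioo (-(π/2)) (π/2),
        Real.sqrt (S * Real.sqrt ((T*Real.sin θ)^2 + r₀^2) *
          (S + Real.sqrt ((T*Real.sin θ)^2 + r₀^2)) / a) := by
  have hS0 : 0 < S := lt_trans hr₀ hS
  have hT0 : 0 < T := by rw [hT]; exact Real.sqrt_pos.mpr (by nlinarith)
  have hT2 : T^2 = S^2 - r₀^2 := by rw [hT]; exact Real.sq_sqrt (by nlinarith)
  rw [intervalIntegral.integral_of_le (by linarith), MeasureTheory.integral_Ioc_eq_integral_Ioo,
    ← image_sin T hT0,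
    MeasureTheory.integral_image_eq_integral_abs_deriv_smul measurableSet_Ioo
      (fun θ _ => ((Real.hasDerivAt_sin θ).const_mul T).hasDerivWithinAt)
      (fun x hx y hy h => Real.injOn_sin (Set.Ioo_subset_Icc_self hx)
        (Set.Ioo_subset_Icc_self hy) (mul_left_cancel₀ hT0.ne' h))]
  apply MeasureTheory.setIntegral_congr_fun measurableSet_Ioo
  intro θ hθ
  have hcos : 0 < Real.cos θ := Real.cos_pos_of_mem_Ioo hθ
  set u := Real.sqrt ((T*Real.sin θ)^2 + r₀^2) with hu
  have hu0 : 0 < u := Real.sqrt_pos.mpr (by positivity)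
  have hu2 : u^2 = (T*Real.sin θ)^2 + r₀^2 := Real.sq_sqrt (by positivity)
  have hsc : Real.sin θ^2 + Real.cos θ^2 = 1 := Real.sin_sq_add_cos_sq θ
  have hSu : S^2 - u^2 = (T*Real.cos θ)^2 := by linear_combination -hT2 - hu2 - T^2*hsc
  have hSu0 : (0:ℝ) < S + u := by positivity
  have hq : a/u + c = (T*Real.cos θ)^2 * (a/(u*S*(S+u))) := by
    rw [hc]
    have h9 : a/u + -(a/S) = a*(S^2-u^2)/(u*S*(S+u)) := by
      field_simp
      ring
    rw [h9, hSu]; ring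
  have hq0 : 0 < Real.sqrt (a/(u*S*(S+u))) := Real.sqrt_pos.mpr (by positivity)
  show |T * Real.cos θ| • (1 / Real.sqrt (a / u + c)) = _
  rw [abs_of_pos (by positivity : (0:ℝ) < T * Real.cos θ), smul_eq_mul, hq,
    Real.sqrt_mul (sq_nonneg _), Real.sqrt_sq (by positivity : (0:ℝ) ≤ T * Real.cos θ)]
  have hbeta : (fun x => Real.sqrt (S * Real.sqrt ((T*Real.sin x)^2 + r₀^2) *
      (S + Real.sqrt ((T*Real.sin x)^2 + r₀^2)) / a)) θ = Real.sqrt (S * u * (S+u)/a) := rfl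
  rw [hbeta, show S * u * (S+u)/a = (a/(u*S*(S+u)))⁻¹ by rw [inv_div]; ring, Real.sqrt_inv]
  field_simp

lemma key_bounds(a r₀ S T : ℝ) (ha : 0 < a) (hr₀ : 0 < r₀) (hS : r₀ < S)
    (hT : T = Real.sqrt (S^2 - r₀^2)) :
    π * Real.sqrt (2*r₀^3/a) ≤ (∫ θ in Set.Ioo (-(π/2)) (π/2),
        Real.sqrt (S * Real.sqrt ((T*Real.sin θ)^2 + r₀^2) *
          (S + Real.sqrt ((T*Real.sin θ)^2 + r₀^2)) / a)) ∧
    (∫ θ in Set.Ioo (-(π/2)) (π/2),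
        Real.sqrt (S * Real.sqrt ((T*Real.sin θ)^2 + r₀^2) *
          (S + Real.sqrt ((T*Real.sin θ)^2 + r₀^2)) / a)) ≤ π * Real.sqrt (2*S^3/a) := by
  have hS0 : 0 < S := lt_trans hr₀ hS
  have hT2 : T^2 = S^2 - r₀^2 := by rw [hT]; exact Real.sq_sqrt (by nlinarith)
  have hcont : Continuous (fun θ : ℝ => Real.sqrt (S * Real.sqrt ((T*Real.sin θ)^2 + r₀^2) *
      (S + Real.sqrt ((T*Real.sin θ)^2 + r₀^2)) / a)) := by fun_prop
  have hint : MeasureTheory.IntegrableOn (fun θ : ℝ => Real.sqrt (S * Real.sqrt ((T*Real.sin θ)^2 + r₀^2) *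
      (S + Real.sqrt ((T*Real.sin θ)^2 + r₀^2)) / a)) (Set.Ioo (-(π/2)) (π/2)) MeasureTheory.volume :=
    (hcont.integrableOn_Icc).mono_set Set.Ioo_subset_Icc_self
  have hvol : ∀ k : ℝ, (∫ _ in Set.Ioo (-(π/2)) (π/2), k) = π * k := by
    intro k
    rw [MeasureTheory.setIntegral_const, MeasureTheory.measureReal_def, Real.volume_Ioo,
      show π/2 - -(π/2) = π by ring, ENNReal.toReal_ofReal Real.pi_pos.le, smul_eq_mul]
  have hbd : ∀ θ : ℝ, θ ∈ Set.Ioo (-(π/2)) (π/2) →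
      Real.sqrt (2*r₀^3/a) ≤ Real.sqrt (S * Real.sqrt ((T*Real.sin θ)^2 + r₀^2) *
        (S + Real.sqrt ((T*Real.sin θ)^2 + r₀^2)) / a) ∧
      Real.sqrt (S * Real.sqrt ((T*Real.sin θ)^2 + r₀^2) *
        (S + Real.sqrt ((T*Real.sin θ)^2 + r₀^2)) / a) ≤ Real.sqrt (2*S^3/a) := by
    intro θ _
    set u := Real.sqrt ((T*Real.sin θ)^2 + r₀^2) with hu
    have hu2 : u^2 = (T*Real.sin θ)^2 + r₀^2 := Real.sq_sqrt (by positivity)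
    have hur : r₀ ≤ u := by
      have h := Real.sqrt_le_sqrt (show r₀^2 ≤ (T*Real.sin θ)^2 + r₀^2 by nlinarith [sq_nonneg (T*Real.sin θ)])
      rwa [Real.sqrt_sq hr₀.le] at h
    have huS : u ≤ S := by
      have h := Real.sqrt_le_sqrt (show (T*Real.sin θ)^2 + r₀^2 ≤ S^2 by nlinarith [Real.sin_sq_le_one θ, sq_nonneg T])
      rwa [Real.sqrt_sq hS0.le] at h
    have hu0 : (0:ℝ) ≤ u := Real.sqrt_nonneg _
    constructor
    · refine Real.sqrt_le_sqrt ?_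
      rw [div_le_div_iff₀ ha ha]
      nlinarith [mul_nonneg (sub_nonneg.2 hS.le) (mul_nonneg hu0 (by linarith : (0:ℝ) ≤ S+u)),
        mul_nonneg (mul_nonneg hr₀.le (sub_nonneg.2 hur)) (by linarith : (0:ℝ) ≤ S+u),
        mul_nonneg (mul_nonneg hr₀.le hr₀.le) (by linarith : (0:ℝ) ≤ S+u-2*r₀)]
    · refine Real.sqrt_le_sqrt ?_
      rw [div_le_div_iff₀ ha ha]
      nlinarith [mul_nonneg (mul_nonneg hS0.le (sub_nonneg.2 huS)) (by linarith : (0:ℝ) ≤ S+u),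
        mul_nonneg (mul_nonneg hS0.le hS0.le) (sub_nonneg.2 huS)]
  constructor
  · rw [← hvol (Real.sqrt (2*r₀^3/a))]
    exact MeasureTheory.setIntegral_mono_on
      (MeasureTheory.integrableOn_const (by rw [Real.volume_Ioo]; exact ENNReal.ofReal_lt_top.ne))
      hint measurableSet_Ioo (fun θ hθ => (hbd θ hθ).1)
  · rw [← hvol (Real.sqrt (2*S^3/a))]
    exact MeasureTheory.setIntegral_mono_on hint
      (MeasureTheory.integrableOn_const (by rw [Real.volume_Ioo]; exact ENNReal.ofReal_lt_top.ne))
      measurableSet_Ioo (fun θ hθ => (hbd θ hθ).2)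

theorem limit_period_at_center
    (m N r₀ : ℝ) (hm : 0 < m) (hN : 0 < N) (hr₀ : 0 < r₀)
    (t₁ : ℝ → ℝ)
    (ht₁ : ∀ c, t₁ c = Real.sqrt (16 * m ^ 2 * N ^ 2 / c ^ 2 - r₀ ^ 2)) :
    Tendsto (fun c => ∫ z in (-(t₁ c))..(t₁ c),
        1 / Real.sqrt (4 * m * N / Real.sqrt (z ^ 2 + r₀ ^ 2) + c))
      (𝓝[>] (-4 * m * N / r₀))
      (𝓝 (π * Real.sqrt (r₀ ^ 3 / (2 * m * N)))) := by
  have ha : (0:ℝ) < 4 * m * N := by positivity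
  have hL : -4 * m * N / r₀ < 0 := by
    apply div_neg_of_neg_of_pos (by nlinarith) hr₀
  have hval : π * Real.sqrt (r₀ ^ 3 / (2 * m * N)) = π * Real.sqrt (2*r₀^3/(4*m*N)) := by
    rw [show r₀ ^ 3 / (2 * m * N) = 2*r₀^3/(4*m*N) by field_simp; ring]
  rw [hval]
  have hev : ∀ᶠ c in 𝓝[>] (-4 * m * N / r₀), -4 * m * N / r₀ < c ∧ c < 0 := by
    filter_upwards [self_mem_nhdsWithin,
      mem_nhdsWithin_of_mem_nhds (Iio_mem_nhds hL)] with c h1 h2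
    exact ⟨h1, h2⟩
  -- facts about S for eventual c
  have hfacts : ∀ c : ℝ, -4 * m * N / r₀ < c → c < 0 →
      r₀ < 4*m*N/(-c) ∧ c = -((4*m*N)/(4*m*N/(-c))) ∧
      t₁ c = Real.sqrt ((4*m*N/(-c))^2 - r₀^2) := by
    intro c hc1 hc0
    have hnc : 0 < -c := by linarith
    have h1 : -(4*m*N) < c * r₀ := by
      rw [div_lt_iff₀ hr₀] at hc1; linarith
    refine ⟨?_, ?_, ?_⟩
    · rw [lt_div_iff₀ hnc]; nlinarith
    · field_simp
    · rw [ht₁]; congr 1; field_simp; ring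
  apply tendsto_of_tendsto_of_tendsto_of_le_of_le'
    (g := fun _ : ℝ => π * Real.sqrt (2*r₀^3/(4*m*N)))
    (h := fun c : ℝ => π * Real.sqrt (2*(4*m*N/(-c))^3/(4*m*N)))
  · exact tendsto_const_nhds
  · have hne : -(-4 * m * N / r₀) ≠ 0 := by
      rw [show -(-4 * m * N / r₀) = 4*m*N/r₀ by ring]; positivity
    have h2 : Tendsto (fun c : ℝ => 4*m*N/(-c)) (𝓝 (-4 * m * N / r₀))
        (𝓝 (4*m*N/(-(-4 * m * N / r₀)))) :=
      Filter.Tendsto.div tendsto_const_nhds (tendsto_id.neg) hne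
    have h3 : (4*m*N/(-(-4 * m * N / r₀))) = r₀ := by field_simp
    rw [h3] at h2
    have h1 : Tendsto (fun c : ℝ => 4*m*N/(-c)) (𝓝[>] (-4 * m * N / r₀)) (𝓝 r₀) :=
      h2.mono_left nhdsWithin_le_nhds
    have h4 : Tendsto (fun s : ℝ => π * Real.sqrt (2*s^3/(4*m*N))) (𝓝 r₀)
        (𝓝 (π * Real.sqrt (2*r₀^3/(4*m*N)))) := by
      apply Continuous.tendsto
      exact continuous_const.mul (Real.continuous_sqrt.comp
        ((continuous_const.mul (continuous_pow 3)).div_const _))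
    exact h4.comp h1
  · filter_upwards [hev] with c hc
    obtain ⟨hS, hceq, hTeq⟩ := hfacts c hc.1 hc.2
    rw [hTeq, key_cov (4*m*N) r₀ c (4*m*N/(-c)) _ ha hr₀ hS hceq rfl]
    exact (key_bounds (4*m*N) r₀ (4*m*N/(-c)) _ ha hr₀ hS rfl).1
  · filter_upwards [hev] with c hc
    obtain ⟨hS, hceq, hTeq⟩ := hfacts c hc.1 hc.2
    rw [hTeq, key_cov (4*m*N) r₀ c (4*m*N/(-c)) _ ha hr₀ hS hceq rfl]
    exact (key_bounds (4*m*N) r₀ (4*m*N/(-c)) _ ha hr₀ hS rfl).2
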